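/- arXiv:2603.18179 — 7 statements merged into one kernel-verified Lean document; each statement's English description precedes it below -/
import Mathlib

section
/- Let G be a finite abelian group and Γ a set of d characters of G. Then for any δ ∈ (0,1], the Bohr set B(Γ,2δ) satisfies μ_G(B(Γ,2δ)) ≤ 100^d · μ_G(B(Γ,δ)), where μ_G is the uniform probability measure on G. -/
open scoped Classical

lemma floor_eq_abs_sub_lt {a b : ℝ} (h : ⌊a⌋ = ⌊b⌋) : |a - b| < 1 := by
  have h1 := Int.floor_le a
  have h2 := Int.lt_floor_add_one a
  have h3 := Int.floor_le b
  have h4 := Int.lt_floor_add_one b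
  rw [h] at h1 h2
  rw [abs_sub_lt_iff]
  constructor <;> linarith

/-- Growth of Bohr sets: `μ_G(B(Γ,2δ)) ≤ 100^d · μ_G(B(Γ,δ))`. -/
theorem bohr_growth {G : Type} [AddCommGroup G] [Fintype G]
    (Γ : Finset (AddChar G ℂ)) (d : ℕ) (hd : Γ.card = d)
    (δ : ℝ) (hδ : δ ∈ Set.Ioc (0 : ℝ) 1) :
    (Nat.card {x : G | ∀ γ ∈ Γ, ‖γ x - 1‖ ≤ 2 * δ} : ℝ) / Fintype.card G ≤
      100 ^ d *
        ((Nat.card {x : G | ∀ γ ∈ Γ, ‖γ x - 1‖ ≤ δ} : ℝ) / Fintype.card G) := by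
  obtain ⟨hδ0, hδ1⟩ := hδ
  set B2 : Finset G := Finset.univ.filter (fun x => ∀ γ ∈ Γ, ‖γ x - 1‖ ≤ 2 * δ)
    with hB2
  set B1 : Finset G := Finset.univ.filter (fun x => ∀ γ ∈ Γ, ‖γ x - 1‖ ≤ δ)
    with hB1
  have hnorm : ∀ (γ : AddChar G ℂ) (x : G), ‖γ x‖ = 1 := fun γ x =>
    γ.norm_apply x
  have hcard2 : Nat.card {x : G | ∀ γ ∈ Γ, ‖γ x - 1‖ ≤ 2 * δ} = B2.card := by
    rw [Nat.card_eq_fintype_card]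
    simp [hB2, ← Fintype.card_subtype]
  have hcard1 : Nat.card {x : G | ∀ γ ∈ Γ, ‖γ x - 1‖ ≤ δ} = B1.card := by
    rw [Nat.card_eq_fintype_card]
    simp [hB1, ← Fintype.card_subtype]
  set s : ℝ := δ / 2 with hs
  have hs0 : (0:ℝ) < s := by positivity
  set f : G → ({γ // γ ∈ Γ} → ℤ × ℤ) := fun x => fun γ =>
    (⌊(γ.1 x).re / s⌋, ⌊(γ.1 x).im / s⌋) with hf
  -- bounds on re/im for elements of B2
  have hbounds : ∀ x ∈ B2, ∀ γ ∈ Γ,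
      1 - 2*δ ≤ (γ x).re ∧ (γ x).re ≤ 1 ∧ |(γ x).im| ≤ 2*δ := by
    intro x hx γ hγ
    rw [hB2, Finset.mem_filter] at hx
    have habs := hx.2 γ hγ
    have hre : |(γ x).re - 1| ≤ 2*δ := by
      have := Complex.abs_re_le_norm (γ x - 1)
      simpa using this.trans habs
    have him : |(γ x).im| ≤ 2*δ := by
      have := Complex.abs_im_le_norm (γ x - 1)
      simpa using this.trans habs
    have hre1 : (γ x).re ≤ 1 := by
      have := Complex.abs_re_le_norm (γ x)
      rw [hnorm] at this
      exact (le_abs_self _).trans this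
    refine ⟨?_, hre1, him⟩
    have := abs_sub_le_iff.mp hre
    linarith [this.2]
  have key : B2.card ≤ 45 ^ d * B1.card := by
    set t : Finset ({γ // γ ∈ Γ} → ℤ × ℤ) :=
      Fintype.piFinset fun _ => (Finset.Icc (⌊2/δ⌋ - 4) ⌊2/δ⌋) ×ˢ (Finset.Icc (-4 : ℤ) 4)
      with ht
    have htcard : t.card = 45 ^ d := by
      rw [ht, Fintype.card_piFinset]
      have : ∀ γ : {γ // γ ∈ Γ},
          ((Finset.Icc (⌊2/δ⌋ - 4) ⌊2/δ⌋) ×ˢ (Finset.Icc (-4 : ℤ) 4)).card = 45 := by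
        intro γ
        rw [Finset.card_product, Int.card_Icc, Int.card_Icc]
        norm_num
        rfl
      rw [Finset.prod_congr rfl (fun γ _ => this γ), Finset.prod_const, Finset.card_univ,
        Fintype.card_coe, hd]
    have hmaps : ∀ x ∈ B2, f x ∈ t := by
      intro x hx
      rw [ht, Fintype.mem_piFinset]
      intro γ
      obtain ⟨h1, h2, h3⟩ := hbounds x hx γ.1 γ.2
      rw [hf]
      simp only [Finset.mem_product, Finset.mem_Icc]
      have heq : (2:ℝ)/δ - 4 = (1 - 2*δ)/s := by rw [hs]; field_simp; ring
      have heq2 : (2:ℝ)/δ = 1/s := by rw [hs]; field_simp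
      obtain ⟨h3a, h3b⟩ := abs_le.mp h3
      refine ⟨⟨?_, ?_⟩, ?_, ?_⟩
      · have : ((4:ℤ):ℝ) = (4:ℝ) := by norm_num
        rw [show ⌊2/δ⌋ - 4 = ⌊2/δ - ((4:ℤ):ℝ)⌋ by rw [Int.floor_sub_intCast], this]
        apply Int.floor_le_floor
        rw [heq]
        gcongr
      · apply Int.floor_le_floor
        rw [heq2]
        gcongr
      · rw [Int.le_floor]
        push_cast
        rw [le_div_iff₀ hs0]
        rw [hs]; linarith
      · rw [show (4:ℤ) = ⌊(4:ℝ)⌋ by norm_num]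
        apply Int.floor_le_floor
        rw [div_le_iff₀ hs0]
        rw [hs]; linarith
    have hfiber : ∀ c ∈ t, (B2.filter (fun x => f x = c)).card ≤ B1.card := by
      intro c _
      rcases Finset.eq_empty_or_nonempty (B2.filter (fun x => f x = c)) with h | ⟨x0, hx0⟩
      · simp [h]
      · rw [Finset.mem_filter, Finset.mem_filter] at hx0
        apply Finset.card_le_card_of_injOn (fun y => y - x0)
        · intro y hy
          rw [Finset.mem_coe, Finset.mem_filter] at hy
          rw [Finset.mem_coe, hB1, Finset.mem_filter]
          refine ⟨Finset.mem_univ _, fun γ hγ => ?_⟩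
          have hfeq : f y = f x0 := hy.2.trans hx0.2.symm
          have hfloorre : ⌊(γ y).re / s⌋ = ⌊(γ x0).re / s⌋ := by
            have := congrFun hfeq ⟨γ, hγ⟩
            exact (Prod.mk.injEq _ _ _ _ ▸ this).1
          have hfloorim : ⌊(γ y).im / s⌋ = ⌊(γ x0).im / s⌋ := by
            have := congrFun hfeq ⟨γ, hγ⟩
            exact (Prod.mk.injEq _ _ _ _ ▸ this).2
          have hre : |(γ y).re - (γ x0).re| < s := by
            have := floor_eq_abs_sub_lt hfloorre
            rw [← sub_div, abs_div, abs_of_pos hs0, div_lt_one hs0] at this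
            exact this
          have him : |(γ y).im - (γ x0).im| < s := by
            have := floor_eq_abs_sub_lt hfloorim
            rw [← sub_div, abs_div, abs_of_pos hs0, div_lt_one hs0] at this
            exact this
          have hdiff : ‖γ y - γ x0‖ ≤ δ := by
            have := Complex.norm_le_abs_re_add_abs_im (γ y - γ x0)
            simp only [Complex.sub_re, Complex.sub_im] at this
            have : ‖γ y - γ x0‖ ≤ s + s := by
              apply this.trans
              exact add_le_add hre.le him.le
            linarith [this, hs.symm ▸ (by linarith : s + s = δ)]
          have hne : γ x0 ≠ 0 := by
            intro h
            have := hnorm γ x0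
            rw [h] at this; simp at this
          calc ‖γ (y - x0) - 1‖
              = ‖γ y / γ x0 - 1‖ := by rw [AddChar.map_sub_eq_div]
            _ = ‖(γ y - γ x0) / γ x0‖ := by
                congr 1
                field_simp
            _ = ‖γ y - γ x0‖ / ‖γ x0‖ := by rw [norm_div]
            _ = ‖γ y - γ x0‖ := by rw [hnorm]; simp
            _ ≤ δ := hdiff
        · intro a _ b _ hab
          simpa using sub_left_injective hab
    calc B2.card ≤ B1.card * t.card :=
          Finset.card_le_mul_card_image_of_maps_to hmaps B1.card hfiber
      _ = 45 ^ d * B1.card := by rw [htcard]; ring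
  have hGpos : (0:ℝ) < Fintype.card G := by positivity
  rw [hcard1, hcard2]
  rw [div_le_iff₀ hGpos, mul_comm (100^d : ℝ) _, div_mul_eq_mul_div, div_mul_cancel₀ _ hGpos.ne']
  calc (B2.card : ℝ) ≤ 45 ^ d * B1.card := by exact_mod_cast key
    _ ≤ 100 ^ d * B1.card := by
        have : (45:ℝ)^d ≤ 100^d := by
          apply pow_le_pow_left₀ (by norm_num) (by norm_num)
        exact mul_le_mul_of_nonneg_right this (Nat.cast_nonneg _)
    _ = _ := by ring
end

section
/- Let G be a finite abelian group, Γ a set of d characters, δ ∈ (0,1], l ∈ ℕ, and η ∈ (0,1]. Then there exist δ* ∈ [δ/2, δ] and δ' ≥ c·δη/(l·d) (for an absolute constant c > 0) such that μ_G(B(Γ,δ*) + l·B(Γ,δ')) ≤ (1+η)·μ_G(B(Γ,δ*)) and l·B(Γ,δ') ⊆ B(Γ,δ*). -/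
open scoped Classical Pointwise

/-- `l`-fold iterated sumset `l·B = B + ⋯ + B`. -/
def iterSumset {G : Type*} [AddCommGroup G] (s : Set G) : ℕ → Set G
  | 0 => {0}
  | n + 1 => s + iterSumset s n

private lemma chain_pigeon' {η : ℝ} (hη : 0 ≤ η) (g : ℕ → ℕ) :
    ∀ N : ℕ, (∀ j < N, (1+η) * (g j : ℝ) < g (j+1)) → (1+η)^N * (g 0 : ℝ) ≤ g N := by
  intro N
  induction N with
  | zero => simp
  | succ n ih =>
    intro h
    have h1 := ih (fun j hj => h j (by omega))
    have h2 := h n (by omega)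
    calc (1+η)^(n+1) * (g 0 : ℝ) = (1+η) * ((1+η)^n * g 0) := by ring
      _ ≤ (1+η) * g n := mul_le_mul_of_nonneg_left h1 (by linarith)
      _ ≤ g (n+1) := le_of_lt h2

section aux
variable {G : Type} [AddCommGroup G] [Fintype G]

private noncomputable def bohrF (Γ : Finset (AddChar G ℂ)) (w : ℝ) : Finset G :=
  Finset.univ.filter (fun x => ∀ γ ∈ Γ, ‖γ x - 1‖ ≤ w)

private lemma mem_bohrF {Γ : Finset (AddChar G ℂ)} {w : ℝ} {x : G} :
    x ∈ bohrF Γ w ↔ ∀ γ ∈ Γ, ‖γ x - 1‖ ≤ w := by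
  simp [bohrF]

private lemma abs_char : ∀ (γ : AddChar G ℂ) (x : G), ‖γ x‖ = 1 := by
  intro γ x
  rw [AddChar.norm_apply]

private lemma zero_mem_bohrF {Γ : Finset (AddChar G ℂ)} {w : ℝ} (hw : 0 ≤ w) :
    (0:G) ∈ bohrF Γ w := by
  rw [mem_bohrF]; intro γ _; simp [AddChar.map_zero_eq_one, hw]

private lemma abs_char_add (γ : AddChar G ℂ) (a b : G) :
    ‖γ (a+b) - 1‖ ≤ ‖γ a - 1‖ + ‖γ b - 1‖ := by
  rw [AddChar.map_add_eq_mul]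
  have h : γ a * γ b - 1 = (γ a - 1) * γ b + (γ b - 1) := by ring
  rw [h]
  calc ‖(γ a - 1) * γ b + (γ b - 1)‖
      ≤ ‖(γ a - 1) * γ b‖ + ‖γ b - 1‖ := norm_add_le _ _
    _ = ‖γ a - 1‖ + ‖γ b - 1‖ := by
        rw [norm_mul, abs_char, mul_one]

private lemma iterSumset_bohr_subset (Γ : Finset (AddChar G ℂ)) {w : ℝ} :
    ∀ n : ℕ, iterSumset {x : G | ∀ γ ∈ Γ, ‖γ x - 1‖ ≤ w} n ⊆
      {x : G | ∀ γ ∈ Γ, ‖γ x - 1‖ ≤ n * w} := by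
  intro n
  induction n with
  | zero =>
    intro x hx
    simp only [iterSumset, Set.mem_singleton_iff] at hx
    subst hx
    intro γ _
    simp [AddChar.map_zero_eq_one]
  | succ n ih =>
    intro x hx
    obtain ⟨a, ha, b, hb, rfl⟩ := hx
    intro γ hγ
    have hb' := ih hb γ hγ
    have ha' := ha γ hγ
    calc ‖γ (a + b) - 1‖
        ≤ ‖γ a - 1‖ + ‖γ b - 1‖ := abs_char_add γ a b
      _ ≤ w + n * w := add_le_add ha' hb'
      _ = (n+1 : ℕ) * w := by push_cast; ring

private lemma natCard_bohr_eq (Γ : Finset (AddChar G ℂ)) (w : ℝ) :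
    (Nat.card {x : G | ∀ γ ∈ Γ, ‖γ x - 1‖ ≤ w}) = (bohrF Γ w).card := by
  rw [Nat.card_coe_set_eq, Set.ncard_eq_toFinset_card']
  simp [bohrF, Set.toFinset_setOf]

private lemma bohr_cover (Γ : Finset (AddChar G ℂ)) {δ : ℝ} (hδ0 : 0 < δ) :
    (bohrF Γ δ).card ≤ 45 ^ Γ.card * (bohrF Γ (δ/2)).card := by
  have ht0 : 0 < δ/4 := by positivity
  set f : G → (↥Γ → ℤ × ℤ) :=
    fun x γ => (⌊(γ.1 x).re / (δ/4)⌋, ⌊(γ.1 x).im / (δ/4)⌋) with hf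
  set T : Finset (↥Γ → ℤ × ℤ) :=
    Fintype.piFinset (fun _ => Finset.Icc (⌊4/δ⌋ - 4) ⌊4/δ⌋ ×ˢ Finset.Icc (-4) 4) with hT
  have hmem : ∀ x ∈ bohrF Γ δ, f x ∈ T := by
    intro x hx
    rw [hT, Fintype.mem_piFinset]
    intro γ
    have h1 : ‖γ.1 x - 1‖ ≤ δ := (mem_bohrF.mp hx) γ.1 γ.2
    have hn : ‖γ.1 x‖ = 1 := abs_char _ _
    rw [Finset.mem_product]
    constructor
    · rw [Finset.mem_Icc]
      have hre1 : (γ.1 x).re ≤ 1 := by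
        calc (γ.1 x).re ≤ ‖γ.1 x‖ := Complex.re_le_norm _
          _ = 1 := hn
      have hre2 : 1 - δ ≤ (γ.1 x).re := by
        have : 1 - (γ.1 x).re ≤ ‖γ.1 x - 1‖ := by
          calc 1 - (γ.1 x).re = -(((γ.1 x) - 1).re) := by simp
            _ ≤ |((γ.1 x) - 1).re| := neg_le_abs _
            _ ≤ ‖γ.1 x - 1‖ := Complex.abs_re_le_norm _
        linarith
      constructor
      · have h4 : 4/δ*δ = (4:ℝ) := div_mul_cancel₀ _ (ne_of_gt hδ0)
        have hle : (4:ℝ)/δ - 4 ≤ (γ.1 x).re / (δ/4) := by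
          rw [le_div_iff₀ ht0]
          nlinarith
        calc ⌊(4:ℝ)/δ⌋ - 4 = ⌊(4:ℝ)/δ - (4:ℤ)⌋ := (Int.floor_sub_intCast _ _).symm
          _ ≤ ⌊(γ.1 x).re / (δ/4)⌋ := Int.floor_le_floor (by push_cast; linarith)
      · have hle : (γ.1 x).re / (δ/4) ≤ 4/δ := by
          rw [div_le_div_iff₀ (by positivity) (by positivity)]
          nlinarith
        exact Int.floor_le_floor hle
    · rw [Finset.mem_Icc]
      have him : |(γ.1 x).im| ≤ δ := by
        calc |(γ.1 x).im| = |((γ.1 x) - 1).im| := by simp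
          _ ≤ ‖(γ.1 x) - 1‖ := Complex.abs_im_le_norm _
          _ ≤ δ := h1
      rw [abs_le] at him
      constructor
      · apply Int.le_floor.mpr
        push_cast
        rw [le_div_iff₀ ht0]; nlinarith
      · have : (γ.1 x).im / (δ/4) ≤ ((4:ℤ):ℝ) := by
          push_cast; rw [div_le_iff₀ ht0]; nlinarith
        calc ⌊(γ.1 x).im / (δ/4)⌋ ≤ ⌊((4:ℤ):ℝ)⌋ := Int.floor_le_floor this
          _ = 4 := Int.floor_intCast _
  have hfib : ∀ x ∈ bohrF Γ δ, ∀ y ∈ bohrF Γ δ, f x = f y → x - y ∈ bohrF Γ (δ/2) := by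
    intro x hx y hy hxy
    rw [mem_bohrF]
    intro γ hγ
    have heq := congrFun hxy ⟨γ, hγ⟩
    rw [hf, Prod.mk.injEq] at heq
    have hre : |(γ x).re / (δ/4) - (γ y).re / (δ/4)| < 1 :=
      Int.abs_sub_lt_one_of_floor_eq_floor heq.1
    have him : |(γ x).im / (δ/4) - (γ y).im / (δ/4)| < 1 :=
      Int.abs_sub_lt_one_of_floor_eq_floor heq.2
    rw [div_sub_div_same, abs_div, abs_of_pos ht0, div_lt_one ht0] at hre him
    have hdiff : ‖γ x - γ y‖ ≤ δ/2 := by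
      calc ‖γ x - γ y‖ ≤ |(γ x - γ y).re| + |(γ x - γ y).im| :=
            Complex.norm_le_abs_re_add_abs_im _
        _ = |(γ x).re - (γ y).re| + |(γ x).im - (γ y).im| := by simp
        _ ≤ δ/4 + δ/4 := le_of_lt (add_lt_add hre him)
        _ = δ/2 := by ring
    have hy1 : ‖γ y‖ = 1 := abs_char _ _
    have hyne : γ y ≠ 0 := by
      intro h; rw [h] at hy1; simp at hy1
    have : γ (x - y) - 1 = (γ x - γ y) / γ y := by
      rw [AddChar.map_sub_eq_div]
      field_simp
    rw [this, norm_div, hy1, div_one]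
    exact hdiff
  have key := Finset.card_eq_sum_card_fiberwise hmem
  have hb : ∀ v ∈ T, ((bohrF Γ δ).filter (fun x => f x = v)).card ≤ (bohrF Γ (δ/2)).card := by
    intro v _
    rcases Finset.eq_empty_or_nonempty ((bohrF Γ δ).filter (fun x => f x = v)) with h | ⟨x₀, hx₀⟩
    · simp [h]
    · rw [Finset.mem_filter] at hx₀
      apply Finset.card_le_card_of_injOn (fun x => x - x₀)
      · intro x hx
        rw [Finset.mem_coe, Finset.mem_filter] at hx
        exact hfib x hx.1 x₀ hx₀.1 (hx.2.trans hx₀.2.symm)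
      · intro a _ b _ hab
        simpa using sub_left_injective hab
  have hTcard : T.card = 45 ^ Γ.card := by
    rw [hT, Fintype.card_piFinset]
    simp only [Finset.card_product, Int.card_Icc]
    rw [Finset.prod_const, Finset.card_univ, Fintype.card_coe]
    have h5 : (⌊4/δ⌋ + 1 - (⌊4/δ⌋ - 4)).toNat = 5 := by omega
    have h9 : ((4:ℤ) + 1 - -4).toNat = 9 := by omega
    rw [h5, h9]
  calc (bohrF Γ δ).card = ∑ v ∈ T, ((bohrF Γ δ).filter (fun x => f x = v)).card := key
    _ ≤ T.card * (bohrF Γ (δ/2)).card := by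
        rw [← smul_eq_mul]; exact Finset.sum_le_card_nsmul T _ _ hb
    _ = 45 ^ Γ.card * (bohrF Γ (δ/2)).card := by rw [hTcard]

end aux

/-- Regular pairs of Bohr sets: there are widths `δ* ∈ [δ/2,δ]` and
`δ' ≥ c·δη/(l·d)` with `μ_G(B(Γ,δ*) + l·B(Γ,δ')) ≤ (1+η)μ_G(B(Γ,δ*))` and
`l·B(Γ,δ') ⊆ B(Γ,δ*)`. -/
theorem bohr_regular : ∃ c : ℝ, 0 < c ∧
    ∀ (G : Type) [AddCommGroup G] [Fintype G]
      (Γ : Finset (AddChar G ℂ)) (δ η : ℝ) (l : ℕ),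
      δ ∈ Set.Ioc (0 : ℝ) 1 → η ∈ Set.Ioc (0 : ℝ) 1 →
      ∃ δstar δ' : ℝ, δstar ∈ Set.Icc (δ / 2) δ ∧ 0 < δ' ∧
        c * δ * η / (l * Γ.card) ≤ δ' ∧
        (Nat.card ({x : G | ∀ γ ∈ Γ, ‖γ x - 1‖ ≤ δstar} +
            iterSumset {x : G | ∀ γ ∈ Γ, ‖γ x - 1‖ ≤ δ'} l) : ℝ) /
            Fintype.card G ≤
          (1 + η) *
            ((Nat.card {x : G | ∀ γ ∈ Γ, ‖γ x - 1‖ ≤ δstar} : ℝ) /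
              Fintype.card G) ∧
        iterSumset {x : G | ∀ γ ∈ Γ, ‖γ x - 1‖ ≤ δ'} l ⊆
          {x : G | ∀ γ ∈ Γ, ‖γ x - 1‖ ≤ δstar} := by
  refine ⟨1/24, by norm_num, ?_⟩
  intro G _ _ Γ δ η l hδ hη
  obtain ⟨hδ0, hδ1⟩ := hδ
  obtain ⟨hη0, hη1⟩ := hη
  have hGpos : (0:ℝ) < Fintype.card G := by
    exact_mod_cast Fintype.card_pos
  -- trivial case l = 0
  rcases Nat.eq_zero_or_pos l with hl | hlpos
  · subst hl
    refine ⟨δ, δ, ⟨by linarith, le_rfl⟩, hδ0, by norm_num [hδ0.le], ?_, ?_⟩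
    · have hA : {x : G | ∀ γ ∈ Γ, ‖γ x - 1‖ ≤ δ} +
          iterSumset {x : G | ∀ γ ∈ Γ, ‖γ x - 1‖ ≤ δ} 0 =
          {x : G | ∀ γ ∈ Γ, ‖γ x - 1‖ ≤ δ} := by
        show _ + ({0} : Set G) = _
        simp
      rw [hA]
      have hnn : (0:ℝ) ≤ (Nat.card {x : G | ∀ γ ∈ Γ, ‖γ x - 1‖ ≤ δ} : ℝ) /
          Fintype.card G := by positivity
      nlinarith
    · intro x hx
      simp only [iterSumset, Set.mem_singleton_iff] at hx
      subst hx
      intro γ _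
      simp [AddChar.map_zero_eq_one]
      linarith
  -- trivial case Γ = ∅
  rcases Finset.eq_empty_or_nonempty Γ with hΓ | hΓne
  · subst hΓ
    have huniv : ∀ w : ℝ, {x : G | ∀ γ ∈ (∅ : Finset (AddChar G ℂ)),
        ‖γ x - 1‖ ≤ w} = Set.univ := by
      intro w; ext x; simp
    refine ⟨δ, δ, ⟨by linarith, le_rfl⟩, hδ0, by norm_num [hδ0.le], ?_, ?_⟩
    · have h1 : (Nat.card ({x : G | ∀ γ ∈ (∅ : Finset (AddChar G ℂ)),
          ‖γ x - 1‖ ≤ δ} +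
          iterSumset {x : G | ∀ γ ∈ (∅ : Finset (AddChar G ℂ)),
            ‖γ x - 1‖ ≤ δ} l) : ℝ) ≤ Fintype.card G := by
        have := Set.ncard_le_ncard (Set.subset_univ
          ({x : G | ∀ γ ∈ (∅ : Finset (AddChar G ℂ)), ‖γ x - 1‖ ≤ δ} +
            iterSumset {x : G | ∀ γ ∈ (∅ : Finset (AddChar G ℂ)),
              ‖γ x - 1‖ ≤ δ} l)) Set.finite_univ
        rw [Set.ncard_univ, Nat.card_eq_fintype_card] at this
        rw [Nat.card_coe_set_eq]
        exact_mod_cast this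
      have h2 : (Nat.card {x : G | ∀ γ ∈ (∅ : Finset (AddChar G ℂ)),
          ‖γ x - 1‖ ≤ δ} : ℝ) = Fintype.card G := by
        rw [huniv δ, Nat.card_coe_set_eq, Set.ncard_univ, Nat.card_eq_fintype_card]
      rw [h2]
      rw [div_self (ne_of_gt hGpos)]
      calc (Nat.card ({x : G | ∀ γ ∈ (∅ : Finset (AddChar G ℂ)),
            ‖γ x - 1‖ ≤ δ} +
            iterSumset {x : G | ∀ γ ∈ (∅ : Finset (AddChar G ℂ)),
              ‖γ x - 1‖ ≤ δ} l) : ℝ) / Fintype.card G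
          ≤ Fintype.card G / Fintype.card G := by gcongr
        _ = 1 := div_self (ne_of_gt hGpos)
        _ ≤ (1+η) * 1 := by nlinarith
    · rw [huniv δ]
      exact Set.subset_univ _
  -- main case
  have hd1 : 1 ≤ Γ.card := Finset.card_pos.mpr hΓne
  have hd0 : (0:ℝ) < Γ.card := by exact_mod_cast hd1
  have hl0 : (0:ℝ) < l := by exact_mod_cast hlpos
  obtain ⟨d, hdd⟩ : ∃ d, d = Γ.card := ⟨_, rfl⟩
  rw [← hdd] at hd1 hd0
  obtain ⟨m, hm⟩ : ∃ m, m = ⌈1/η⌉₊ := ⟨_, rfl⟩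
  have hm0 : 0 < m := by rw [hm]; exact Nat.ceil_pos.mpr (by positivity)
  have hmη : 1 ≤ (m:ℝ) * η := by
    have h : (1:ℝ)/η ≤ m := by rw [hm]; exact Nat.le_ceil _
    calc (1:ℝ) = (1/η) * η := by field_simp
      _ ≤ (m:ℝ) * η := by nlinarith
  have hmη2 : (m:ℝ) * η ≤ 2 := by
    have h : (m:ℝ) < 1/η + 1 := by rw [hm]; exact Nat.ceil_lt_add_one (by positivity)
    have h1 : (1:ℝ) ≤ 1/η := by
      rw [le_div_iff₀ hη0]; linarith
    have : (m:ℝ) ≤ 2/η := by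
      calc (m:ℝ) ≤ 1/η + 1 := le_of_lt h
        _ ≤ 1/η + 1/η := by linarith
        _ = 2/η := by ring
    calc (m:ℝ) * η ≤ (2/η) * η := by nlinarith
      _ = 2 := by field_simp
  obtain ⟨N, hN⟩ : ∃ N, N = 6 * d * m := ⟨_, rfl⟩
  have hN0 : 0 < N := by rw [hN]; positivity
  have hN0' : (0:ℝ) < N := by exact_mod_cast hN0
  obtain ⟨δ', hδ'⟩ : ∃ x : ℝ, x = δ / (2 * l * N) := ⟨_, rfl⟩
  have hδ'pos : 0 < δ' := by
    rw [hδ']; positivity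
  have hlower : 1/24 * δ * η / (l * d) ≤ δ' := by
    rw [hδ', div_le_div_iff₀ (by positivity) (by positivity)]
    have hNcast : (N:ℝ) = 6 * d * m := by rw [hN]; push_cast; ring
    rw [hNcast]
    have key : (m:ℝ) * η * (δ * (l * d)) ≤ 2 * (δ * (l * d)) :=
      mul_le_mul_of_nonneg_right hmη2 (by positivity)
    nlinarith
  have hlδ' : (l:ℝ) * δ' = δ / (2*N) := by
    rw [hδ']
    field_simp
  have hlδ'pos : 0 < (l:ℝ) * δ' := by positivity
  have hlδ'le : (l:ℝ) * δ' ≤ δ / 2 := by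
    rw [hlδ']
    rw [div_le_div_iff₀ (by positivity) (by norm_num)]
    have hN1' : (1:ℝ) ≤ N := by exact_mod_cast hN0
    nlinarith [hN1', hδ0]
  -- the chain of widths
  obtain ⟨W, hWval⟩ : ∃ W : ℕ → ℝ, ∀ j : ℕ, W j = δ/2 + j * ((l:ℝ) * δ') :=
    ⟨fun j => δ/2 + j * ((l:ℝ) * δ'), fun j => rfl⟩
  have hW0 : W 0 = δ/2 := by rw [hWval]; simp
  have hWN : W N = δ := by
    rw [hWval, hlδ']
    field_simp
    ring
  have hWmono : ∀ i j : ℕ, i ≤ j → W i ≤ W j := by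
    intro i j hij
    rw [hWval, hWval]
    have h1 : (i:ℝ) ≤ j := by exact_mod_cast hij
    have h2 := mul_le_mul_of_nonneg_right h1 (le_of_lt hlδ'pos)
    linarith
  have hWpos : ∀ j : ℕ, δ/2 ≤ W j := by
    intro j
    rw [← hW0]
    exact hWmono 0 j (Nat.zero_le _)
  -- pigeonhole
  have hkey : ∃ j < N, ((bohrF Γ (W (j+1))).card : ℝ) ≤ (1+η) * (bohrF Γ (W j)).card := by
    by_contra hcon
    push_neg at hcon
    have hchain := chain_pigeon' (le_of_lt hη0) (fun j => (bohrF Γ (W j)).card) N hcon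
    have h0 : 1 ≤ ((bohrF Γ (W 0)).card : ℝ) := by
      have : (0:G) ∈ bohrF Γ (W 0) := zero_mem_bohrF (by rw [hW0]; linarith)
      have := Finset.card_pos.mpr ⟨0, this⟩
      exact_mod_cast this
    have hcover : ((bohrF Γ (W N)).card : ℝ) ≤ 45^d * (bohrF Γ (W 0)).card := by
      rw [hWN, hW0, hdd]
      exact_mod_cast bohr_cover Γ hδ0
    have h2m : (2:ℝ) ≤ (1+η)^m := by
      have hb := one_add_mul_le_pow (a := η) (by linarith) m
      calc (2:ℝ) ≤ 1 + m * η := by linarith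
        _ ≤ (1+η)^m := by
            calc (1:ℝ) + m * η = 1 + (m:ℝ) * η := by ring
              _ ≤ (1+η)^m := by exact_mod_cast hb
    have hpow : (64:ℝ)^d ≤ (1+η)^N := by
      calc (64:ℝ)^d = ((2:ℝ)^6)^d := by norm_num
        _ = (2:ℝ)^(6*d) := by rw [← pow_mul]
        _ ≤ ((1+η)^m)^(6*d) := pow_le_pow_left₀ (by norm_num) h2m _
        _ = (1+η)^(m*(6*d)) := by rw [← pow_mul]
        _ = (1+η)^N := by rw [hN]; congr 1; ring
    have hg0 : (0:ℝ) < (bohrF Γ (W 0)).card := by linarith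
    have hcomb : (64:ℝ)^d * (bohrF Γ (W 0)).card ≤ 45^d * (bohrF Γ (W 0)).card := by
      calc (64:ℝ)^d * (bohrF Γ (W 0)).card ≤ (1+η)^N * (bohrF Γ (W 0)).card :=
            mul_le_mul_of_nonneg_right hpow (le_of_lt hg0)
        _ ≤ (bohrF Γ (W N)).card := hchain
        _ ≤ 45^d * (bohrF Γ (W 0)).card := hcover
    have h6445 : (64:ℝ)^d ≤ 45^d := le_of_mul_le_mul_right hcomb hg0
    have : (45:ℝ)^d < 64^d := by
      apply pow_lt_pow_left₀ (by norm_num) (by norm_num)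
      omega
    linarith
  obtain ⟨j, hjN, hjle⟩ := hkey
  have hWj1 : W (j+1) = W j + (l:ℝ) * δ' := by
    rw [hWval, hWval]; push_cast; ring
  have hWjδ : W j ≤ δ := by
    rw [← hWN]; exact hWmono j N (le_of_lt hjN)
  have hsubset : iterSumset {x : G | ∀ γ ∈ Γ, ‖γ x - 1‖ ≤ δ'} l ⊆
      {x : G | ∀ γ ∈ Γ, ‖γ x - 1‖ ≤ W j} := by
    intro x hx
    have hx' := iterSumset_bohr_subset Γ l hx
    intro γ hγ
    calc ‖γ x - 1‖ ≤ (l:ℝ) * δ' := hx' γ hγ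
      _ ≤ δ/2 := hlδ'le
      _ ≤ W j := hWpos j
  refine ⟨W j, δ', ⟨hWpos j, hWjδ⟩, hδ'pos, by rw [← hdd]; exact hlower, ?_, hsubset⟩
  -- the measure bound
  have hsum : {x : G | ∀ γ ∈ Γ, ‖γ x - 1‖ ≤ W j} +
      iterSumset {x : G | ∀ γ ∈ Γ, ‖γ x - 1‖ ≤ δ'} l ⊆
      {x : G | ∀ γ ∈ Γ, ‖γ x - 1‖ ≤ W (j+1)} := by
    intro z hz
    obtain ⟨a, ha, b, hb, rfl⟩ := hz
    have hb' := iterSumset_bohr_subset Γ l hb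
    intro γ hγ
    calc ‖γ (a + b) - 1‖
        ≤ ‖γ a - 1‖ + ‖γ b - 1‖ := abs_char_add γ a b
      _ ≤ W j + (l:ℝ) * δ' := add_le_add (ha γ hγ) (hb' γ hγ)
      _ = W (j+1) := hWj1.symm
  have hcard1 : (Nat.card ({x : G | ∀ γ ∈ Γ, ‖γ x - 1‖ ≤ W j} +
      iterSumset {x : G | ∀ γ ∈ Γ, ‖γ x - 1‖ ≤ δ'} l) : ℝ) ≤
      ((bohrF Γ (W (j+1))).card : ℝ) := by
    rw [Nat.card_coe_set_eq]
    have h := Set.ncard_le_ncard hsum (Set.toFinite _)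
    have h2 : ({x : G | ∀ γ ∈ Γ, ‖γ x - 1‖ ≤ W (j+1)}).ncard =
        (bohrF Γ (W (j+1))).card := by
      rw [← Nat.card_coe_set_eq, natCard_bohr_eq]
    rw [h2] at h
    exact_mod_cast h
  have hcard2 : (Nat.card {x : G | ∀ γ ∈ Γ, ‖γ x - 1‖ ≤ W j} : ℝ) =
      ((bohrF Γ (W j)).card : ℝ) := by
    rw [natCard_bohr_eq]
  calc (Nat.card ({x : G | ∀ γ ∈ Γ, ‖γ x - 1‖ ≤ W j} +
        iterSumset {x : G | ∀ γ ∈ Γ, ‖γ x - 1‖ ≤ δ'} l) : ℝ) /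
        Fintype.card G
      ≤ ((bohrF Γ (W (j+1))).card : ℝ) / Fintype.card G := by gcongr
    _ ≤ ((1+η) * (bohrF Γ (W j)).card) / Fintype.card G := by gcongr
    _ = (1 + η) * (((bohrF Γ (W j)).card : ℝ) / Fintype.card G) := by ring
    _ = (1 + η) * ((Nat.card {x : G | ∀ γ ∈ Γ, ‖γ x - 1‖ ≤ W j} : ℝ) /
        Fintype.card G) := by rw [hcard2]
end

section
/- Let G be a finite abelian group, η, κ ∈ (0,1], B₀, B₁ ⊆ G nonempty sets with μ_G(B₁ + B₀) ≤ (1+η)·μ_G(B₀), and γ a character of G with |μ̂_{B₀}(γ)| ≥ κ. Then |1 − γ(x)| ≤ 2η/κ for all x ∈ B₁ − B₁. -/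
open scoped Classical Pointwise

/-- If `μ_G(B₁+B₀) ≤ (1+η)μ_G(B₀)` and `|μ̂_{B₀}(γ)| ≥ κ`, then
`|1 − γ(x)| ≤ 2η/κ` for all `x ∈ B₁ − B₁`. -/
theorem fourier_bohr_approx {G : Type} [AddCommGroup G] [Fintype G]
    (η κ : ℝ) (hη : η ∈ Set.Ioc (0 : ℝ) 1) (hκ : κ ∈ Set.Ioc (0 : ℝ) 1)
    (B₀ B₁ : Set G) (h₀ : B₀.Nonempty) (h₁ : B₁.Nonempty)
    (hadd : (Nat.card (B₁ + B₀) : ℝ) / Fintype.card G ≤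
      (1 + η) * ((Nat.card B₀ : ℝ) / Fintype.card G))
    (γ : AddChar G ℂ)
    (hγ : κ ≤ ‖(Nat.card B₀ : ℂ)⁻¹ *
      ∑ x : G, if x ∈ B₀ then (starRingEnd ℂ) (γ x) else 0‖) :
    ∀ x ∈ B₁ - B₁, ‖1 - γ x‖ ≤ 2 * η / κ := by
  set S : ℂ := ∑ x ∈ B₀.toFinset, (starRingEnd ℂ) (γ x) with hSdef
  set T : ℂ := ∑ x ∈ (B₁ + B₀).toFinset, (starRingEnd ℂ) (γ x) with hTdef
  have hcard₀ : Nat.card B₀ = B₀.toFinset.card := by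
    rw [Nat.card_coe_set_eq, Set.ncard_eq_toFinset_card']
  have hcard₂ : Nat.card (B₁ + B₀) = (B₁ + B₀).toFinset.card := by
    rw [Nat.card_coe_set_eq, Set.ncard_eq_toFinset_card']
  have hn₀pos : (0 : ℝ) < B₀.toFinset.card := by
    have : B₀.toFinset.Nonempty := by
      obtain ⟨a, ha⟩ := h₀
      exact ⟨a, Set.mem_toFinset.mpr ha⟩
    exact_mod_cast Finset.card_pos.mpr this
  -- rewrite hγ
  have hsum : (∑ x : G, if x ∈ B₀ then (starRingEnd ℂ) (γ x) else 0) = S := by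
    rw [hSdef, ← Finset.sum_filter]
    congr 1
    ext x
    simp [Set.mem_toFinset]
  have hS : κ * B₀.toFinset.card ≤ ‖S‖ := by
    rw [hsum, hcard₀, norm_mul, norm_inv, Complex.norm_natCast] at hγ
    have := mul_le_mul_of_nonneg_right hγ hn₀pos.le
    rwa [mul_comm ((B₀.toFinset.card : ℝ)⁻¹) (‖S‖), mul_assoc,
      inv_mul_cancel₀ hn₀pos.ne', mul_one] at this
  -- cardinality bound
  have hcard : ((B₁ + B₀).toFinset.card : ℝ) ≤ (1 + η) * B₀.toFinset.card := by
    have hG : (0 : ℝ) < Fintype.card G := by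
      have : Nonempty G := ⟨h₀.choose⟩
      exact_mod_cast Fintype.card_pos
    rw [← mul_div_assoc] at hadd
    rw [hcard₀, hcard₂] at hadd
    exact (div_le_div_iff_of_pos_right hG).mp hadd
  -- key estimate
  have key : ∀ b ∈ B₁, ‖T - (starRingEnd ℂ) (γ b) * S‖
      ≤ η * B₀.toFinset.card := by
    intro b hb
    set C : Finset G := B₀.toFinset.image (b + ·) with hCdef
    have hCsub : C ⊆ (B₁ + B₀).toFinset := by
      intro y hy
      obtain ⟨x, hx, rfl⟩ := Finset.mem_image.mp hy
      exact Set.mem_toFinset.mpr (Set.add_mem_add hb (Set.mem_toFinset.mp hx))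
    have hCcard : C.card = B₀.toFinset.card :=
      Finset.card_image_of_injective _ (add_right_injective b)
    have hCsum : ∑ y ∈ C, (starRingEnd ℂ) (γ y) = (starRingEnd ℂ) (γ b) * S := by
      rw [hCdef, Finset.sum_image (fun x _ y _ h => add_left_cancel h), hSdef,
        Finset.mul_sum]
      refine Finset.sum_congr rfl fun x _ => ?_
      rw [AddChar.map_add_eq_mul, map_mul]
    have hdiff : T - (starRingEnd ℂ) (γ b) * S
        = ∑ y ∈ (B₁ + B₀).toFinset \ C, (starRingEnd ℂ) (γ y) := by
      rw [← hCsum, hTdef, ← Finset.sum_sdiff hCsub, add_sub_cancel_right]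
    rw [hdiff]
    calc ‖∑ y ∈ (B₁ + B₀).toFinset \ C, (starRingEnd ℂ) (γ y)‖
        ≤ ∑ y ∈ (B₁ + B₀).toFinset \ C, ‖(starRingEnd ℂ) (γ y)‖ := by
          exact norm_sum_le _ _
      _ = ((B₁ + B₀).toFinset \ C).card := by
          rw [Finset.sum_congr rfl fun y _ => ?_, Finset.sum_const, nsmul_eq_mul, mul_one]
          rw [Complex.norm_conj]
          exact γ.norm_apply y
      _ ≤ (1 + η) * B₀.toFinset.card - B₀.toFinset.card := by
          rw [Finset.card_sdiff_of_subset hCsub, hCcard,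
            Nat.cast_sub (by rw [← hCcard]; exact Finset.card_le_card hCsub)]
          linarith [hcard]
      _ = η * B₀.toFinset.card := by ring
  -- conclusion
  intro x hx
  obtain ⟨b, hb, b', hb', rfl⟩ := Set.mem_sub.mp hx
  have h1 := key b hb
  have h2 := key b' hb'
  have hγb : (starRingEnd ℂ) (γ b) = (starRingEnd ℂ) (γ b') * (starRingEnd ℂ) (γ (b - b')) := by
    rw [← map_mul, ← AddChar.map_add_eq_mul, add_sub_cancel]
  have hident : ‖(starRingEnd ℂ) (γ b) * S - (starRingEnd ℂ) (γ b') * S‖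
      = ‖1 - γ (b - b')‖ * ‖S‖ := by
    have : (starRingEnd ℂ) (γ b) * S - (starRingEnd ℂ) (γ b') * S
        = (starRingEnd ℂ) (γ b') * (((starRingEnd ℂ) (γ (b - b'))) - 1) * S := by
      rw [hγb]; ring
    rw [this, norm_mul, norm_mul, Complex.norm_conj]
    have hb'1 : ‖γ b'‖ = 1 := γ.norm_apply b'
    have : ‖(starRingEnd ℂ) (γ (b - b')) - 1‖ = ‖1 - γ (b - b')‖ := by
      rw [← Complex.norm_conj ((starRingEnd ℂ) (γ (b - b')) - 1), map_sub,
        Complex.conj_conj, map_one, ← norm_neg, neg_sub]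
    rw [hb'1, one_mul, this]
  have htri : ‖1 - γ (b - b')‖ * ‖S‖
      ≤ 2 * η * B₀.toFinset.card := by
    rw [← hident]
    calc ‖(starRingEnd ℂ) (γ b) * S - (starRingEnd ℂ) (γ b') * S‖
        ≤ ‖(starRingEnd ℂ) (γ b) * S - T‖
          + ‖T - (starRingEnd ℂ) (γ b') * S‖ := by
          have := norm_add_le ((starRingEnd ℂ) (γ b) * S - T)
            (T - (starRingEnd ℂ) (γ b') * S)
          rwa [sub_add_sub_cancel] at this
      _ ≤ η * B₀.toFinset.card + η * B₀.toFinset.card := by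
          have : ‖(starRingEnd ℂ) (γ b) * S - T‖
              = ‖T - (starRingEnd ℂ) (γ b) * S‖ := by
            rw [← norm_neg, neg_sub]
          rw [this]
          exact add_le_add h1 h2
      _ = 2 * η * B₀.toFinset.card := by ring
  have hmul : ‖1 - γ (b - b')‖ * (κ * B₀.toFinset.card)
      ≤ 2 * η * B₀.toFinset.card :=
    le_trans (mul_le_mul_of_nonneg_left hS (norm_nonneg _)) htri
  have hκpos := hκ.1
  rw [le_div_iff₀ hκpos]
  rw [← mul_assoc] at hmul
  have h2η : 2 * η * ↑B₀.toFinset.card = (2 * η) * ↑B₀.toFinset.card := by ring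
  rw [h2η] at hmul
  exact le_of_mul_le_mul_right hmul hn₀pos
end

section
/- Let G be a finite abelian group, α, η ∈ (0,1], and B₀, B₁ ⊆ G nonempty with μ_G(B₀ + B₁) ≤ (1+η)·μ_G(B₀). Suppose A ⊆ G satisfies ‖1_A ∗ μ_{B₀}‖_∞ ≥ α. Then for every probability measure ν supported in B₁ − B₁, we have ‖1_A ∗ ν‖_∞ ≥ α − 2η. -/
open scoped Classical Pointwise

/-- Hereditary density: if `μ_G(B₀+B₁) ≤ (1+η)μ_G(B₀)` and `‖1_A ∗ μ_{B₀}‖_∞ ≥ α`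
then `‖1_A ∗ ν‖_∞ ≥ α − 2η` for every probability measure `ν` supported in `B₁ − B₁`. -/
theorem hereditary_density {G : Type} [AddCommGroup G] [Fintype G]
    (α η : ℝ) (hα : α ∈ Set.Ioc (0 : ℝ) 1) (hη : η ∈ Set.Ioc (0 : ℝ) 1)
    (B₀ B₁ : Set G) (h₀ : B₀.Nonempty) (h₁ : B₁.Nonempty)
    (hadd : (Nat.card (B₀ + B₁) : ℝ) / Fintype.card G ≤
      (1 + η) * ((Nat.card B₀ : ℝ) / Fintype.card G))
    (A : Set G)
    (hA : ∃ x : G, α ≤ ∑ y : G, if x - y ∈ A ∧ y ∈ B₀ then (Nat.card B₀ : ℝ)⁻¹ else 0)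
    (ν : G → ℝ) (hν0 : ∀ y, 0 ≤ ν y) (hν1 : ∑ y : G, ν y = 1)
    (hνsupp : ∀ y, ν y ≠ 0 → y ∈ B₁ - B₁) :
    ∃ x : G, α - 2 * η ≤ ∑ y : G, (if x - y ∈ A then (1 : ℝ) else 0) * ν y := by
  classical
  obtain ⟨hα0, hα1⟩ := hα
  obtain ⟨hη0, hη1⟩ := hη
  obtain ⟨x₀, hx₀⟩ := hA
  set U : Finset G := Finset.univ.filter (· ∈ B₀) with hU
  have hUcard : (Nat.card B₀ : ℝ) = (U.card : ℝ) := by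
    rw [Nat.card_eq_fintype_card]
    norm_cast
    exact Fintype.card_of_subtype U (by simp [hU])
  have hUpos : 0 < U.card := by
    obtain ⟨b, hb⟩ := h₀
    exact Finset.card_pos.2 ⟨b, by simp [hU, hb]⟩
  set c : ℝ := (Nat.card B₀ : ℝ) with hcdef
  have hcpos : 0 < c := by rw [hUcard]; exact_mod_cast hUpos
  have hinv : 0 ≤ c⁻¹ := inv_nonneg.2 hcpos.le
  have hG : (0 : ℝ) < Fintype.card G := by exact_mod_cast Fintype.card_pos
  have hBB : (Nat.card (B₀ + B₁) : ℝ) ≤ (1 + η) * c := by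
    have h := mul_le_mul_of_nonneg_right hadd hG.le
    rw [div_mul_cancel₀ _ hG.ne'] at h
    calc (Nat.card (B₀ + B₁) : ℝ) ≤ (1 + η) * (c / Fintype.card G) * Fintype.card G := h
    _ = (1 + η) * c := by field_simp
  -- Step 2: for d ∈ B₁ - B₁, |B₀ \ (B₀ + d)| ≤ η |B₀|
  have key : ∀ d ∈ B₁ - B₁,
      ((Finset.univ.filter (fun z : G => z ∈ B₀ ∧ z - d ∉ B₀)).card : ℝ) ≤ η * c := by
    rintro d hd
    rw [Set.mem_sub] at hd
    obtain ⟨b, hb, b', hb', rfl⟩ := hd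
    set T : Finset G := Finset.univ.filter (fun z : G => z ∈ B₀ ∧ z - (b - b') ∉ B₀) with hT
    set W : Finset G := Finset.univ.filter (· ∈ B₀ + B₁) with hW
    have hWcard : (Nat.card (B₀ + B₁) : ℝ) = (W.card : ℝ) := by
      rw [Nat.card_eq_fintype_card]
      norm_cast
      exact Fintype.card_of_subtype W (by simp [hW])
    have hTW : T.image (· + b') ⊆ W := by
      intro z hz
      simp only [Finset.mem_image] at hz
      obtain ⟨t, ht, rfl⟩ := hz
      simp only [hT, Finset.mem_filter] at ht
      simp only [hW, Finset.mem_filter, Finset.mem_univ, true_and]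
      exact Set.add_mem_add ht.2.1 hb'
    have hUW : U.image (· + b) ⊆ W := by
      intro z hz
      simp only [Finset.mem_image] at hz
      obtain ⟨t, ht, rfl⟩ := hz
      simp only [hU, Finset.mem_filter] at ht
      simp only [hW, Finset.mem_filter, Finset.mem_univ, true_and]
      exact Set.add_mem_add ht.2 hb
    have hdisj : Disjoint (T.image (· + b')) (U.image (· + b)) := by
      rw [Finset.disjoint_left]
      rintro z hz1 hz2
      simp only [Finset.mem_image] at hz1 hz2
      obtain ⟨t, ht, rfl⟩ := hz1
      obtain ⟨u, hu, huv⟩ := hz2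
      simp only [hT, Finset.mem_filter] at ht
      simp only [hU, Finset.mem_filter] at hu
      have heq : t - (b - b') = u := by
        have h1 : u = t + b' - b := by rw [eq_sub_iff_add_eq]; exact huv
        rw [h1]; abel
      exact ht.2.2 (heq ▸ hu.2)
    have hsum : T.card + U.card ≤ W.card := by
      have h1 : (T.image (· + b') ∪ U.image (· + b)).card ≤ W.card :=
        Finset.card_le_card (Finset.union_subset hTW hUW)
      rw [Finset.card_union_of_disjoint hdisj,
        Finset.card_image_of_injective _ (add_left_injective b'),
        Finset.card_image_of_injective _ (add_left_injective b)] at h1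
      exact h1
    have h1 : (T.card : ℝ) + U.card ≤ W.card := by exact_mod_cast hsum
    have h2 : (W.card : ℝ) ≤ (1 + η) * c := by rw [← hWcard]; exact hBB
    have h3 : c = (U.card : ℝ) := hUcard
    linarith
  -- Step 3: shift bound
  have hshift : ∀ d ∈ B₁ - B₁, ∀ x : G,
      (∑ y : G, if x - y ∈ A ∧ y ∈ B₀ then c⁻¹ else 0) - η ≤
      ∑ y : G, if x - d - y ∈ A ∧ y ∈ B₀ then c⁻¹ else 0 := by
    intro d hd x
    have hrw : (∑ y : G, if x - d - y ∈ A ∧ y ∈ B₀ then c⁻¹ else 0) =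
        ∑ z : G, if x - z ∈ A ∧ z - d ∈ B₀ then c⁻¹ else 0 := by
      rw [← Equiv.sum_comp (Equiv.subRight d)
        (fun y => if x - d - y ∈ A ∧ y ∈ B₀ then c⁻¹ else 0)]
      apply Finset.sum_congr rfl
      intro z _
      have h : x - d - (z - d) = x - z := by abel
      simp only [Equiv.subRight_apply, h]
    rw [hrw]
    have hdiff : (∑ y : G, if x - y ∈ A ∧ y ∈ B₀ then c⁻¹ else 0) -
        (∑ z : G, if x - z ∈ A ∧ z - d ∈ B₀ then c⁻¹ else 0) ≤
        ∑ z : G, (if z ∈ B₀ ∧ z - d ∉ B₀ then c⁻¹ else 0) := by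
      rw [← Finset.sum_sub_distrib]
      apply Finset.sum_le_sum
      intro z _
      by_cases h1 : x - z ∈ A <;> by_cases h2 : z ∈ B₀ <;> by_cases h3 : z - d ∈ B₀ <;>
        simp [h1, h2, h3] <;> linarith
    have hsum2 : (∑ z : G, (if z ∈ B₀ ∧ z - d ∉ B₀ then c⁻¹ else 0)) ≤ η := by
      rw [Finset.sum_ite, Finset.sum_const, Finset.sum_const_zero, add_zero, nsmul_eq_mul]
      calc ((Finset.univ.filter (fun z : G => z ∈ B₀ ∧ z - d ∉ B₀)).card : ℝ) * c⁻¹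
          = ((Finset.univ.filter (fun z : G => z ∈ B₀ ∧ z - d ∉ B₀)).card : ℝ) / c := by
            rw [div_eq_mul_inv]
      _ ≤ η := (div_le_iff₀ hcpos).2 (by linarith [key d hd])
    linarith
  -- Step 4: conclude
  by_contra hcon
  push_neg at hcon
  have hlow : α - η ≤ ∑ d : G, ν d * ∑ y : G,
      (if x₀ - d - y ∈ A ∧ y ∈ B₀ then c⁻¹ else 0) := by
    have hpt : ∀ d : G, ν d * (α - η) ≤ ν d * ∑ y : G,
        (if x₀ - d - y ∈ A ∧ y ∈ B₀ then c⁻¹ else 0) := by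
      intro d
      by_cases hz : ν d = 0
      · simp [hz]
      · apply mul_le_mul_of_nonneg_left _ (hν0 d)
        have := hshift d (hνsupp d hz) x₀
        linarith
    calc α - η = (∑ d : G, ν d) * (α - η) := by rw [hν1, one_mul]
    _ = ∑ d : G, ν d * (α - η) := by rw [Finset.sum_mul]
    _ ≤ _ := Finset.sum_le_sum (fun d _ => hpt d)
  have hswap : (∑ d : G, ν d * ∑ y : G, (if x₀ - d - y ∈ A ∧ y ∈ B₀ then c⁻¹ else 0))
      = ∑ y : G, (if y ∈ B₀ then c⁻¹ else 0) *
          (∑ z : G, (if (x₀ - y) - z ∈ A then (1 : ℝ) else 0) * ν z) := by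
    have hms : ∀ d : G, ν d * ∑ y : G, (if x₀ - d - y ∈ A ∧ y ∈ B₀ then c⁻¹ else 0)
        = ∑ y : G, ν d * (if x₀ - d - y ∈ A ∧ y ∈ B₀ then c⁻¹ else 0) :=
      fun d => Finset.mul_sum _ _ _
    rw [Finset.sum_congr rfl (fun d _ => hms d), Finset.sum_comm]
    apply Finset.sum_congr rfl
    intro y _
    rw [Finset.mul_sum]
    apply Finset.sum_congr rfl
    intro d _
    have hxy : x₀ - d - y = x₀ - y - d := by abel
    by_cases h1 : y ∈ B₀ <;> by_cases h2 : x₀ - y - d ∈ A <;>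
      simp [h1, h2, hxy] <;> ring
  have hwsum : (∑ y : G, (if y ∈ B₀ then c⁻¹ else 0)) = 1 := by
    rw [Finset.sum_ite, Finset.sum_const, Finset.sum_const_zero, add_zero, nsmul_eq_mul]
    have : ((Finset.univ.filter (fun z : G => z ∈ B₀)).card : ℝ) = c := hUcard.symm
    rw [this]
    exact mul_inv_cancel₀ hcpos.ne'
  have hup : (∑ y : G, (if y ∈ B₀ then c⁻¹ else 0) *
      (∑ z : G, (if (x₀ - y) - z ∈ A then (1 : ℝ) else 0) * ν z)) ≤ α - 2 * η := by
    calc (∑ y : G, (if y ∈ B₀ then c⁻¹ else 0) *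
        (∑ z : G, (if (x₀ - y) - z ∈ A then (1 : ℝ) else 0) * ν z))
        ≤ ∑ y : G, (if y ∈ B₀ then c⁻¹ else 0) * (α - 2 * η) := by
          apply Finset.sum_le_sum
          intro y _
          exact mul_le_mul_of_nonneg_left (le_of_lt (hcon (x₀ - y)))
            (by by_cases hy : y ∈ B₀ <;> simp [hy, hinv])
    _ = α - 2 * η := by rw [← Finset.sum_mul, hwsum, one_mul]
  rw [hswap] at hlow
  linarith
end

section
/- Let G be a finite abelian group, B₀, B₁ ⊆ G nonempty sets with μ_G(B₀ + B₁) ≤ (1+η)·μ_G(B₀) for some η ∈ (0,1]. Then for any probability measure ν supported in B₁ − B₁, the total variation distance satisfies ‖μ_{B₀} ∗ ν − μ_{B₀}‖ ≤ 2η. -/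
open scoped Classical Pointwise

open Finset

private lemma ind_sum {G : Type} [AddCommGroup G] [Fintype G] (B : Set G) (c : ℝ) :
    ∑ x : G, (if x ∈ B then c else 0) = (B.toFinset.card : ℝ) * c := by
  rw [← Finset.sum_filter]
  have : Finset.univ.filter (· ∈ B) = B.toFinset := by ext x; simp
  rw [this, Finset.sum_const, nsmul_eq_mul]

private lemma shift_bound {G : Type} [AddCommGroup G] [Fintype G] {η : ℝ}
    (B₀ B₁ : Set G) (h₀ : B₀.Nonempty)
    (hm : (Nat.card (B₀ + B₁) : ℝ) ≤ (1 + η) * Nat.card B₀)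
    (y : G) (hy : y ∈ B₁ - B₁) :
    ∑ x : G, |(if x - y ∈ B₀ then (Nat.card B₀ : ℝ)⁻¹ else 0) -
      (if x ∈ B₀ then (Nat.card B₀ : ℝ)⁻¹ else 0)| ≤ 2 * η := by
  obtain ⟨b, hb, b', hb', hbb⟩ := hy
  set n : ℝ := (Nat.card B₀ : ℝ) with hn
  have hcard : Nat.card B₀ = B₀.toFinset.card := by
    rw [Nat.card_eq_fintype_card, Set.toFinset_card]
  have hnpos : 0 < n := by
    have := h₀.to_subtype
    rw [hn]
    exact_mod_cast Nat.card_pos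
  have hninv : (0:ℝ) ≤ n⁻¹ := by positivity
  -- the shifted finset
  set A : Finset G := B₀.toFinset with hA
  set A' : Finset G := A.image (· + y) with hA'
  have hmemA' : ∀ x : G, x ∈ A' ↔ x - y ∈ B₀ := by
    intro x
    simp only [hA', Finset.mem_image, hA, Set.mem_toFinset]
    constructor
    · rintro ⟨z, hz, rfl⟩; simpa using hz
    · intro h; exact ⟨x - y, h, by abel⟩
  have hcardA' : A'.card = A.card := Finset.card_image_of_injective _ (add_left_injective y)
  -- union bounded by card of B₀+B₁
  have hunion : (A ∪ A').card ≤ (B₀ + B₁).toFinset.card := by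
    apply Finset.card_le_card_of_injOn (fun x => x + b')
    · intro x hx
      simp only [Finset.mem_coe, Set.mem_toFinset]
      rcases Finset.mem_union.mp hx with hx | hx
      · exact Set.add_mem_add (by simpa [hA, Set.mem_toFinset] using hx) hb'
      · have : x - y ∈ B₀ := (hmemA' x).mp hx
        have : (x - y) + b ∈ B₀ + B₁ := Set.add_mem_add this hb
        have heq : (x - y) + b = x + b' := by rw [← hbb]; beta_reduce; abel
        rwa [heq] at this
    · intro a _ c _ h; exact add_left_injective b' h
  have hinter : 2 * A.card ≤ (B₀ + B₁).toFinset.card + (A ∩ A').card := by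
    have := Finset.card_union_add_card_inter A A'
    omega
  -- the pointwise identity
  have hpt : ∀ x : G, |(if x - y ∈ B₀ then n⁻¹ else 0) - (if x ∈ B₀ then n⁻¹ else 0)|
      = (if x - y ∈ B₀ then n⁻¹ else 0) + (if x ∈ B₀ then n⁻¹ else 0)
        - 2 * (if x ∈ A ∩ A' then n⁻¹ else 0) := by
    intro x
    have hmem : x ∈ A ∩ A' ↔ x ∈ B₀ ∧ x - y ∈ B₀ := by
      simp [Finset.mem_inter, hmemA' x, hA, Set.mem_toFinset, and_comm]
    by_cases h1 : x - y ∈ B₀ <;> by_cases h2 : x ∈ B₀ <;>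
      simp [h1, h2, hmem, abs_of_nonneg hninv, abs_of_nonpos (neg_nonpos.mpr hninv)] <;> ring
  rw [Finset.sum_congr rfl (fun x _ => hpt x)]
  have s1 : ∑ x : G, (if x - y ∈ B₀ then n⁻¹ else 0) = 1 := by
    rw [← Equiv.sum_comp (Equiv.addRight y) (fun x => if x - y ∈ B₀ then n⁻¹ else 0)]
    simp only [Equiv.coe_addRight, add_sub_cancel_right]
    rw [ind_sum]
    have h' : ((B₀.toFinset.card : ℕ) : ℝ) = n := by rw [hn, hcard]
    rw [h', mul_inv_cancel₀ hnpos.ne']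
  have s2 : ∑ x : G, (if x ∈ B₀ then n⁻¹ else 0) = 1 := by
    rw [ind_sum]
    have h' : ((B₀.toFinset.card : ℕ) : ℝ) = n := by rw [hn, hcard]
    rw [h', mul_inv_cancel₀ hnpos.ne']
  have s3 : ∑ x : G, (if x ∈ A ∩ A' then n⁻¹ else 0) = ((A ∩ A').card : ℝ) * n⁻¹ := by
    rw [← Finset.sum_filter]
    have : Finset.univ.filter (· ∈ A ∩ A') = A ∩ A' := by ext x; simp
    rw [this, Finset.sum_const, nsmul_eq_mul]
  rw [Finset.sum_sub_distrib, Finset.sum_add_distrib, s1, s2, ← Finset.mul_sum, s3]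
  -- now numeric
  have hcardBB : ((B₀+B₁).toFinset.card : ℝ) = Nat.card (B₀+B₁) := by
    rw [Nat.card_eq_fintype_card, Set.toFinset_card]
  have hAn : (A.card : ℝ) = n := by rw [hn, hcard]
  have hI : (2:ℝ) * n ≤ ((1+η) * n) + ((A ∩ A').card : ℝ) := by
    have := hinter
    have h2 : (2 * A.card : ℝ) ≤ ((B₀ + B₁).toFinset.card : ℝ) + ((A ∩ A').card : ℝ) := by
      exact_mod_cast this
    rw [hAn] at h2
    calc (2:ℝ) * n ≤ ((B₀ + B₁).toFinset.card : ℝ) + ((A ∩ A').card : ℝ) := h2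
      _ ≤ ((1+η) * n) + ((A ∩ A').card : ℝ) := by rw [hcardBB]; linarith [hm]
  have hIn : (1:ℝ) - η ≤ ((A ∩ A').card : ℝ) * n⁻¹ := by
    have h1 : ((1:ℝ) - η) * n ≤ ((A ∩ A').card : ℝ) := by nlinarith
    have h2 := mul_le_mul_of_nonneg_right h1 hninv
    rwa [mul_assoc, mul_inv_cancel₀ hnpos.ne', mul_one] at h2
  linarith

/-- Total variation stability: if `μ_G(B₀+B₁) ≤ (1+η)μ_G(B₀)` then for any probability
measure `ν` supported in `B₁ − B₁` we have `‖μ_{B₀} ∗ ν − μ_{B₀}‖ ≤ 2η`. -/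
theorem tv_convolution_stability {G : Type} [AddCommGroup G] [Fintype G]
    (η : ℝ) (hη : η ∈ Set.Ioc (0 : ℝ) 1)
    (B₀ B₁ : Set G) (h₀ : B₀.Nonempty) (h₁ : B₁.Nonempty)
    (hadd : (Nat.card (B₀ + B₁) : ℝ) / Fintype.card G ≤
      (1 + η) * ((Nat.card B₀ : ℝ) / Fintype.card G))
    (ν : G → ℝ) (hν0 : ∀ y, 0 ≤ ν y) (hν1 : ∑ y : G, ν y = 1)
    (hνsupp : ∀ y, ν y ≠ 0 → y ∈ B₁ - B₁) :
    ∑ x : G, |(∑ y : G, (if x - y ∈ B₀ then (Nat.card B₀ : ℝ)⁻¹ else 0) * ν y) -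
        (if x ∈ B₀ then (Nat.card B₀ : ℝ)⁻¹ else 0)| ≤ 2 * η := by
  have hGpos : (0:ℝ) < Fintype.card G := by
    have : Nonempty G := ⟨h₀.some⟩
    exact_mod_cast Fintype.card_pos
  have hm : (Nat.card (B₀ + B₁) : ℝ) ≤ (1 + η) * Nat.card B₀ := by
    rw [← mul_div_assoc] at hadd
    exact (div_le_div_iff_of_pos_right hGpos).mp hadd
  set f : G → ℝ := fun x => if x ∈ B₀ then (Nat.card B₀ : ℝ)⁻¹ else 0 with hf
  calc ∑ x : G, |(∑ y : G, f (x - y) * ν y) - f x|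
      = ∑ x : G, |∑ y : G, (f (x - y) - f x) * ν y| := by
        apply Finset.sum_congr rfl
        intro x _
        congr 1
        conv_lhs => rw [show f x = ∑ y : G, f x * ν y from by
          rw [← Finset.mul_sum, hν1, mul_one]]
        rw [← Finset.sum_sub_distrib]
        exact Finset.sum_congr rfl fun y _ => (sub_mul _ _ _).symm
    _ ≤ ∑ x : G, ∑ y : G, |f (x - y) - f x| * ν y := by
        apply Finset.sum_le_sum
        intro x _
        refine (Finset.abs_sum_le_sum_abs _ _).trans (le_of_eq ?_)
        apply Finset.sum_congr rfl
        intro y _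
        rw [abs_mul, abs_of_nonneg (hν0 y)]
    _ = ∑ y : G, (∑ x : G, |f (x - y) - f x|) * ν y := by
        rw [Finset.sum_comm]
        simp [Finset.sum_mul]
    _ ≤ ∑ y : G, (2 * η) * ν y := by
        apply Finset.sum_le_sum
        intro y _
        by_cases hy : ν y = 0
        · simp [hy]
        · exact mul_le_mul_of_nonneg_right
            (shift_bound B₀ B₁ h₀ hm y (hνsupp y hy)) (hν0 y)
    _ = 2 * η := by rw [← Finset.mul_sum, hν1, mul_one]
end

section
/- Let G be a finite abelian group, μ a probability measure on G, A ⊆ G with μ(A) ≥ α > 0, and ε ∈ (0,1]. Suppose Λ is a set of characters of G that is 1-dissociated with respect to μ and is contained in {γ : |(1_A dμ)^(γ)| ≥ ε·μ(A)}. Then |Λ| ≤ C·ε⁻²·log(2α⁻¹) for an absolute constant C > 0. -/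
open scoped Classical

lemma exp_quad_le {u : ℝ} (h : |u| ≤ 2⁻¹) : Real.exp (u - 2*u^2) ≤ 1 + u := by
  have h1 : -2⁻¹ ≤ u := neg_le_of_abs_le h
  have h2 : u ≤ 2⁻¹ := le_of_abs_le h
  have hz : 1 - (u - 2*u^2) > 0 := by nlinarith
  have he : 1 - (u - 2*u^2) ≤ Real.exp (-(u - 2*u^2)) := by
    linarith [Real.add_one_le_exp (-(u - 2*u^2))]
  have hm : Real.exp (u - 2*u^2) * Real.exp (-(u - 2*u^2)) = 1 := by
    rw [← Real.exp_add]; ring_nf; exact Real.exp_zero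
  have hp := Real.exp_pos (u - 2*u^2)
  have key : (1+u) * (1 - (u - 2*u^2)) ≥ 1 := by nlinarith
  nlinarith [mul_le_mul_of_nonneg_left he hp.le]

set_option maxHeartbeats 1600000 in
/-- Chang-type bound (Lemma `lem.changbd`): a `1`-dissociated set of characters inside the
`ε`-large spectrum of `1_A dμ` has size `O(ε⁻² log 2α⁻¹)`. -/
theorem chang_bound : ∃ C : ℝ, 0 < C ∧
    ∀ (G : Type) [AddCommGroup G] [Fintype G]
      (w : G → ℝ), (∀ x, 0 ≤ w x) → (∑ x : G, w x) = 1 →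
      ∀ (A : Set G) (α ε : ℝ), 0 < α → ε ∈ Set.Ioc (0 : ℝ) 1 →
      α ≤ (∑ x : G, if x ∈ A then w x else 0) →
      ∀ Λ : Finset (AddChar G ℂ),
      -- `Λ` is 1-dissociated with respect to `μ`
      (∀ ω : AddChar G ℂ → ℂ, (∀ l, ‖ω l‖ ≤ 1) →
        ∑ x : G, (∏ l ∈ Λ, (1 + (ω l * l x).re)) * w x ≤ Real.exp 1) →
      -- `Λ` is contained in the `ε`-large spectrum of `1_A dμ`
      (∀ l ∈ Λ, ε * (∑ x : G, if x ∈ A then w x else 0) ≤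
        ‖∑ x : G, (if x ∈ A then (w x : ℂ) else 0) * (starRingEnd ℂ) (l x)‖) →
      (Λ.card : ℝ) ≤ C * ε⁻¹ ^ 2 * Real.log (2 * α⁻¹) := by
  refine ⟨12, by norm_num, ?_⟩
  intro G _ _ w hw hw1 A α ε hα hε hαA Λ hdis hspec
  obtain ⟨hε0, hε1⟩ := hε
  set SA : ℝ := ∑ x : G, if x ∈ A then w x else 0 with hSAdef
  have hSA0 : 0 < SA := lt_of_lt_of_le hα hαA
  have hSA1 : SA ≤ 1 := by
    rw [← hw1]
    exact Finset.sum_le_sum fun x _ => by split <;> simp [hw x]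
  have hα1 : α ≤ 1 := hαA.trans hSA1
  set F : AddChar G ℂ → ℂ :=
    fun l => ∑ x : G, (if x ∈ A then (w x : ℂ) else 0) * (starRingEnd ℂ) (l x) with hFdef
  set t : ℝ := ε / 4 with htdef
  have ht0 : 0 < t := by positivity
  have ht4 : t ≤ 4⁻¹ := by rw [htdef]; linarith
  have hFne : ∀ l ∈ Λ, F l ≠ 0 := by
    intro l hl h0
    have h1 : ε * SA ≤ ‖F l‖ := hspec l hl
    rw [h0] at h1
    simp at h1
    nlinarith
  set ω : AddChar G ℂ → ℂ :=
    fun l => if F l = 0 then 0 else (t : ℂ) * F l / (‖F l‖ : ℂ) with hωdef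
  have hωabs : ∀ l, ‖ω l‖ ≤ 1 := by
    intro l
    simp only [hωdef]
    split
    · simp
    · rename_i hne
      have habs : ‖F l‖ ≠ 0 := by simpa using hne
      rw [norm_div, norm_mul, Complex.norm_real, Complex.norm_real, Real.norm_eq_abs, Real.norm_eq_abs,
        abs_of_pos ht0, abs_of_pos (lt_of_le_of_ne (norm_nonneg _) (Ne.symm habs))]
      rw [mul_div_assoc, div_self habs, mul_one]
      linarith
  have hωre : ∀ l ∈ Λ, (ω l * (starRingEnd ℂ) (F l)).re = t * ‖F l‖ := by
    intro l hl
    have hne := hFne l hl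
    have habs : ((‖F l‖ : ℝ) : ℂ) ≠ 0 := by simpa using hne
    have : ω l * (starRingEnd ℂ) (F l) = ((t * ‖F l‖ : ℝ) : ℂ) := by
      rw [hωdef]
      simp only [if_neg hne]
      rw [div_mul_eq_mul_div, mul_assoc, Complex.mul_conj, Complex.normSq_eq_norm_sq]
      push_cast
      field_simp
    rw [this, Complex.ofReal_re]
  -- pointwise bounds
  set u : AddChar G ℂ → G → ℝ := fun l x => (ω l * l x).re with hudef
  have hut : ∀ l ∈ Λ, ∀ x : G, |u l x| ≤ t := by
    intro l hl x
    have h1 : |u l x| ≤ ‖ω l * l x‖ := Complex.abs_re_le_norm _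
    rw [norm_mul] at h1
    have h2 : ‖l x‖ = 1 := by
      exact AddChar.norm_apply l x
    have h3 : ‖ω l‖ = t := by
      rw [hωdef]
      simp only [if_neg (hFne l hl)]
      have habs : ‖F l‖ ≠ 0 := by simpa using hFne l hl
      rw [norm_div, norm_mul, Complex.norm_real, Complex.norm_real, Real.norm_eq_abs, Real.norm_eq_abs,
        abs_of_pos ht0, abs_of_pos (lt_of_le_of_ne (norm_nonneg _) (Ne.symm habs))]
      rw [mul_div_assoc, div_self habs, mul_one]
    rw [h2, h3, mul_one] at h1
    exact h1
  set n : ℕ := Λ.card with hndef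
  set Y : G → ℝ := fun x => (∑ l ∈ Λ, u l x) - 2 * t^2 * n with hYdef
  have hprod : ∀ x : G, Real.exp (Y x) ≤ ∏ l ∈ Λ, (1 + u l x) := by
    intro x
    have : Y x ≤ ∑ l ∈ Λ, (u l x - 2 * (u l x)^2) := by
      rw [hYdef]
      simp only [Finset.sum_sub_distrib]
      rw [sub_le_sub_iff_left]
      calc (∑ l ∈ Λ, 2 * (u l x)^2) ≤ ∑ l ∈ Λ, 2 * t^2 := by
            refine Finset.sum_le_sum fun l hl => ?_
            have := hut l hl x
            nlinarith [abs_nonneg (u l x), le_of_abs_le this, neg_le_of_abs_le this]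
        _ = 2 * t^2 * n := by rw [Finset.sum_const, nsmul_eq_mul]; ring
    calc Real.exp (Y x) ≤ Real.exp (∑ l ∈ Λ, (u l x - 2 * (u l x)^2)) := Real.exp_le_exp.2 this
      _ = ∏ l ∈ Λ, Real.exp (u l x - 2 * (u l x)^2) := Real.exp_sum _ _
      _ ≤ ∏ l ∈ Λ, (1 + u l x) := by
          refine Finset.prod_le_prod (fun l _ => (Real.exp_pos _).le) fun l hl => ?_
          exact exp_quad_le ((hut l hl x).trans (by norm_num [htdef]; linarith))
  have hfac_nonneg : ∀ x : G, (0:ℝ) ≤ ∏ l ∈ Λ, (1 + u l x) :=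
    fun x => le_trans (Real.exp_pos _).le (hprod x)
  -- Jensen
  set q : G → ℝ := fun x => (if x ∈ A then w x else 0) / SA with hqdef
  have hq0 : ∀ x, 0 ≤ q x := by
    intro x; rw [hqdef]; dsimp only
    split <;> [exact div_nonneg (hw x) hSA0.le; simp]
  have hq1 : ∑ x : G, q x = 1 := by
    rw [hqdef, ← Finset.sum_div, ← hSAdef, div_self hSA0.ne']
  have hjensen : Real.exp (∑ x : G, q x * Y x) ≤ ∑ x : G, q x * Real.exp (Y x) := by
    have := convexOn_exp.map_sum_le (t := Finset.univ) (w := q) (p := Y)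
      (fun i _ => hq0 i) hq1 (fun i _ => Set.mem_univ _)
    simpa [smul_eq_mul] using this
  -- compute ∑ q x * Y x
  have hT : (∑ x : G, (if x ∈ A then w x else 0) * (∑ l ∈ Λ, u l x))
      = ∑ l ∈ Λ, t * ‖F l‖ := by
    have swap : (∑ x : G, (if x ∈ A then w x else 0) * (∑ l ∈ Λ, u l x))
        = ∑ l ∈ Λ, ∑ x : G, (if x ∈ A then w x else 0) * u l x := by
      rw [Finset.sum_comm]
      exact Finset.sum_congr rfl fun x _ => Finset.mul_sum _ _ _
    rw [swap]
    refine Finset.sum_congr rfl fun l hl => ?_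
    have key : (∑ x : G, (if x ∈ A then w x else 0) * u l x)
        = (ω l * (starRingEnd ℂ) (F l)).re := by
      have hconj : (starRingEnd ℂ) (F l) = ∑ x : G, (if x ∈ A then (w x : ℂ) else 0) * l x := by
        rw [hFdef]
        rw [map_sum]
        refine Finset.sum_congr rfl fun x _ => ?_
        rw [map_mul, Complex.conj_conj]
        congr 1
        split <;> simp
      rw [hconj, Finset.mul_sum, Complex.re_sum]
      refine Finset.sum_congr rfl fun x _ => ?_
      rw [hudef]
      dsimp only
      rw [show ω l * ((if x ∈ A then (w x : ℂ) else 0) * l x)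
          = (if x ∈ A then (w x : ℂ) else 0) * (ω l * l x) by ring]
      split
      · rw [Complex.re_ofReal_mul]
      · simp
    rw [key, hωre l hl]
  have hqY : (ε^2 / 8) * n ≤ ∑ x : G, q x * Y x := by
    have expand : (∑ x : G, q x * Y x)
        = (∑ x : G, q x * (∑ l ∈ Λ, u l x)) - 2 * t^2 * n := by
      rw [hYdef]
      simp only [mul_sub]
      rw [Finset.sum_sub_distrib, ← Finset.sum_mul, hq1, one_mul]
    have hsum1 : (∑ x : G, q x * (∑ l ∈ Λ, u l x))
        = (∑ x : G, (if x ∈ A then w x else 0) * (∑ l ∈ Λ, u l x)) / SA := by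
      rw [Finset.sum_div]
      exact Finset.sum_congr rfl fun x _ => by rw [hqdef]; ring
    have hlow : (n : ℝ) * (t * (ε * SA)) ≤ ∑ l ∈ Λ, t * ‖F l‖ := by
      calc (n:ℝ) * (t * (ε * SA)) = ∑ _l ∈ Λ, t * (ε * SA) := by
            rw [Finset.sum_const, nsmul_eq_mul, hndef]
        _ ≤ ∑ l ∈ Λ, t * ‖F l‖ :=
            Finset.sum_le_sum fun l hl => mul_le_mul_of_nonneg_left (hspec l hl) ht0.le
    rw [expand, hsum1, hT]
    have : (n : ℝ) * (t * ε) ≤ (∑ l ∈ Λ, t * ‖F l‖) / SA := by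
      rw [le_div_iff₀ hSA0]
      calc (n:ℝ) * (t * ε) * SA = (n : ℝ) * (t * (ε * SA)) := by ring
        _ ≤ _ := hlow
    have h3 : (ε^2/8) * (n:ℝ) = (n:ℝ) * (t * ε) - 2 * t^2 * n := by rw [htdef]; ring
    linarith [this]
  -- chain of inequalities
  have hchain : SA * Real.exp ((ε^2/8) * n) ≤ Real.exp 1 := by
    have h1 := hdis ω hωabs
    have h2 : (∑ x : G, (if x ∈ A then w x else 0) * Real.exp (Y x))
        ≤ ∑ x : G, (∏ l ∈ Λ, (1 + (ω l * l x).re)) * w x := by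
      refine Finset.sum_le_sum fun x _ => ?_
      have hle : (if x ∈ A then w x else 0) * Real.exp (Y x)
          ≤ (if x ∈ A then w x else 0) * (∏ l ∈ Λ, (1 + u l x)) := by
        refine mul_le_mul_of_nonneg_left (hprod x) ?_
        split <;> simp [hw x]
      refine hle.trans ?_
      rw [mul_comm]
      refine mul_le_mul_of_nonneg_left ?_ (hfac_nonneg x)
      split <;> simp [hw x, le_refl]
    have h3 : (∑ x : G, (if x ∈ A then w x else 0) * Real.exp (Y x))
        = SA * ∑ x : G, q x * Real.exp (Y x) := by
      rw [Finset.mul_sum]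
      refine Finset.sum_congr rfl fun x _ => ?_
      rw [hqdef]
      field_simp
    have h4 : SA * Real.exp ((ε^2/8) * n) ≤ SA * ∑ x : G, q x * Real.exp (Y x) := by
      refine mul_le_mul_of_nonneg_left ?_ hSA0.le
      exact le_trans (Real.exp_le_exp.2 hqY) hjensen
    calc SA * Real.exp ((ε^2/8) * n) ≤ SA * ∑ x : G, q x * Real.exp (Y x) := h4
      _ = ∑ x : G, (if x ∈ A then w x else 0) * Real.exp (Y x) := h3.symm
      _ ≤ ∑ x : G, (∏ l ∈ Λ, (1 + (ω l * l x).re)) * w x := h2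
      _ ≤ Real.exp 1 := h1
  -- extract the bound
  have hαchain : α * Real.exp ((ε^2/8) * n) ≤ Real.exp 1 := by
    refine le_trans ?_ hchain
    exact mul_le_mul_of_nonneg_right hαA (Real.exp_pos _).le
  have hlog : (ε^2/8) * n ≤ 1 + Real.log α⁻¹ := by
    have h1 : Real.exp ((ε^2/8) * n) ≤ Real.exp 1 / α := by
      rw [le_div_iff₀ hα]
      linarith [hαchain]
    have h2 := Real.log_le_log (Real.exp_pos _) h1
    rw [Real.log_exp, Real.log_div (Real.exp_ne_zero 1) (ne_of_gt hα), Real.log_exp] at h2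
    have h3 := Real.log_inv α
    linarith
  have hlogα : 0 ≤ Real.log α⁻¹ := by
    have h := Real.log_nonpos hα.le hα1
    rw [Real.log_inv]; linarith
  have hlog2 : Real.log (2 * α⁻¹) = Real.log 2 + Real.log α⁻¹ :=
    Real.log_mul two_ne_zero (by positivity)
  have hl2 : (0.6931471803 : ℝ) < Real.log 2 := Real.log_two_gt_d9
  have hin : (0:ℝ) ≤ ε⁻¹ ^ 2 := by positivity
  have hone : ε⁻¹ ^ 2 * ε ^ 2 = 1 := by field_simp
  have hεn : ε ^ 2 * n ≤ 8 + 8 * Real.log α⁻¹ := by nlinarith [hlog]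
  have hstep : (n : ℝ) ≤ ε⁻¹ ^ 2 * (8 + 8 * Real.log α⁻¹) := by
    calc (n : ℝ) = ε⁻¹ ^ 2 * (ε ^ 2 * n) := by rw [← mul_assoc, hone, one_mul]
      _ ≤ _ := mul_le_mul_of_nonneg_left hεn hin
  have hfin : ε⁻¹ ^ 2 * (8 + 8 * Real.log α⁻¹)
      ≤ ε⁻¹ ^ 2 * (12 * (Real.log 2 + Real.log α⁻¹)) :=
    mul_le_mul_of_nonneg_left (by nlinarith) hin
  rw [hlog2]
  nlinarith [hstep, hfin]
end

section
/- Let G be a finite abelian group, μ a probability measure on G, and Λ a finite set of characters that is 1-dissociated with respect to μ. Then for every g ∈ ℓ²(Λ), ∫ exp(Re Σ_{λ∈Λ} g(λ)·λ(x)) dμ(x) ≤ exp(1 + ‖g‖²_{ℓ²(Λ)}/2). -/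
open scoped Classical

lemma tanh_nonneg_le_one {t : ℝ} (ht : 0 ≤ t) : 0 ≤ Real.tanh t ∧ Real.tanh t ≤ 1 := by
  rw [Real.tanh_eq_sinh_div_cosh]
  have hc : 0 < Real.cosh t := Real.cosh_pos _
  have hs : 0 ≤ Real.sinh t := Real.sinh_nonneg_iff.2 ht
  have h1 : Real.cosh t - Real.sinh t = Real.exp (-t) := Real.cosh_sub_sinh t
  have h2 : Real.sinh t ≤ Real.cosh t := by
    have := Real.exp_pos (-t); linarith
  exact ⟨div_nonneg hs hc.le, (div_le_one hc).2 h2⟩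

/-- Pointwise inequality: for `|a| = 1`,
`exp (re (c * a)) ≤ cosh |c| * (1 + re (tanh |c| * (c / |c|) * a))`. -/
lemma exp_re_mul_le {c a : ℂ} (ha : ‖a‖ = 1) :
    Real.exp ((c * a).re) ≤
      Real.cosh (‖c‖) *
        (1 + (((Real.tanh (‖c‖) : ℂ) * (c / (‖c‖ : ℂ))) * a).re) := by
  rcases eq_or_ne c 0 with rfl | hc
  · simp
  · set t : ℝ := ‖c‖ with htdef
    have ht : 0 < t := norm_pos_iff.mpr hc
    set u : ℂ := c / (t : ℂ) with hu
    have hy : ‖u * a‖ = 1 := by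
      rw [norm_mul, ha, mul_one, hu, norm_div, Complex.norm_real, Real.norm_eq_abs, abs_of_pos ht,
        div_self ht.ne']
    set y : ℝ := (u * a).re with hydef
    have hyle : |y| ≤ 1 := by
      calc |y| ≤ ‖u * a‖ := Complex.abs_re_le_norm _
        _ = 1 := hy
    have hca : (c * a).re = t * y := by
      have htne : (t : ℂ) ≠ 0 := by exact_mod_cast ht.ne'
      have : c * a = (t : ℂ) * (u * a) := by
        rw [hu, ← mul_assoc, mul_div_assoc', mul_comm (t : ℂ) c, mul_div_assoc, div_self htne, mul_one]
      rw [this, hydef, Complex.re_ofReal_mul]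
    have key : Real.exp (t * y) ≤ Real.cosh t + y * Real.sinh t := by
      have h := Real.exp_mul_le_cosh_add_mul_sinh hyle t
      rwa [mul_comm] at h
    have hre : (((Real.tanh t : ℂ) * u) * a).re = Real.tanh t * y := by
      rw [mul_assoc, Complex.re_ofReal_mul, hydef]
    rw [hca, hre]
    have hcpos : 0 < Real.cosh t := Real.cosh_pos _
    have : Real.cosh t + y * Real.sinh t =
        Real.cosh t * (1 + Real.tanh t * y) := by
      rw [Real.tanh_eq_sinh_div_cosh]; field_simp
    linarith [key, this ▸ key]

/-- Exponential moment bound for a `1`-dissociated set of characters. -/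
theorem dissociated_exp_bound {G : Type} [AddCommGroup G] [Fintype G]
    (w : G → ℝ) (hw0 : ∀ x, 0 ≤ w x) (hw1 : (∑ x : G, w x) = 1)
    (Λ : Finset (AddChar G ℂ))
    (hdis : ∀ ω : AddChar G ℂ → ℂ, (∀ l, ‖ω l‖ ≤ 1) →
      ∑ x : G, (∏ l ∈ Λ, (1 + (ω l * l x).re)) * w x ≤ Real.exp 1)
    (g : AddChar G ℂ → ℂ) :
    ∑ x : G, Real.exp ((∑ l ∈ Λ, g l * l x).re) * w x ≤
      Real.exp (1 + (∑ l ∈ Λ, ‖g l‖ ^ 2) / 2) := by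
  set ω : AddChar G ℂ → ℂ := fun l =>
    (Real.tanh (‖g l‖) : ℂ) * (g l / (‖g l‖ : ℂ)) with hω
  have hωle : ∀ l, ‖ω l‖ ≤ 1 := by
    intro l
    rcases eq_or_ne (g l) 0 with h | h
    · simp [hω, h]
    · have ht := norm_pos_iff.mpr h
      have htanh := tanh_nonneg_le_one (norm_nonneg (g l))
      simp only [hω, norm_mul, norm_div, Complex.norm_real, Real.norm_eq_abs]
      rw [abs_of_nonneg htanh.1, abs_of_pos ht, div_self ht.ne', mul_one]
      exact htanh.2
  set C : ℝ := ∏ l ∈ Λ, Real.cosh (‖g l‖) with hC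
  have hCpos : 0 < C := Finset.prod_pos fun l _ => Real.cosh_pos _
  have key : ∀ x : G, Real.exp ((∑ l ∈ Λ, g l * l x).re) ≤
      C * ∏ l ∈ Λ, (1 + (ω l * l x).re) := by
    intro x
    rw [Complex.re_sum, Real.exp_sum, hC, ← Finset.prod_mul_distrib]
    apply Finset.prod_le_prod (fun l _ => (Real.exp_pos _).le)
    intro l _
    have ha : ‖l x‖ = 1 := by
      exact AddChar.norm_apply l x
    exact exp_re_mul_le ha
  calc ∑ x : G, Real.exp ((∑ l ∈ Λ, g l * l x).re) * w x
      ≤ ∑ x : G, (C * ∏ l ∈ Λ, (1 + (ω l * l x).re)) * w x := by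
        apply Finset.sum_le_sum
        intro x _
        exact mul_le_mul_of_nonneg_right (key x) (hw0 x)
    _ = C * ∑ x : G, (∏ l ∈ Λ, (1 + (ω l * l x).re)) * w x := by
        rw [Finset.mul_sum]; congr 1; ext x; ring
    _ ≤ C * Real.exp 1 := by
        exact mul_le_mul_of_nonneg_left (hdis ω hωle) hCpos.le
    _ ≤ Real.exp ((∑ l ∈ Λ, ‖g l‖ ^ 2) / 2) * Real.exp 1 := by
        apply mul_le_mul_of_nonneg_right _ (Real.exp_pos 1).le
        calc C ≤ ∏ l ∈ Λ, Real.exp (‖g l‖ ^ 2 / 2) :=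
              Finset.prod_le_prod (fun l _ => (Real.cosh_pos _).le)
                (fun l _ => Real.cosh_le_exp_half_sq _)
          _ = Real.exp ((∑ l ∈ Λ, ‖g l‖ ^ 2) / 2) := by
              rw [← Real.exp_sum, Finset.sum_div]
    _ = Real.exp (1 + (∑ l ∈ Λ, ‖g l‖ ^ 2) / 2) := by
        rw [← Real.exp_add, add_comm]
end
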